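/- Let f : ℝⁿ → ℝ ∪ {∞}, let g : ℝⁿ → ℝᵐ be a mapping, and let C be a nonempty subset of ℝᵐ; assume f_* := inf{ f(x) : g(x) ∈ C } is finite and that f is bounded from below on ℝⁿ, i.e., there exists m ∈ ℝ with f(x) ≥ m for all x ∈ ℝⁿ. Define V : ℝᵐ → ℝ ∪ {±∞} by V(u) := inf{ f(x) : g(x) ∈ C + u } (with V(u) := ∞ when no x satisfies g(x) ∈ C + u). If liminf_{u → 0, u ≠ 0} ( V(u) − V(0) ) / ‖u‖ > −∞, then there exists a constant c_* > 0 such that inf{ f(x) : g(x) ∈ C } = inf_{x ∈ ℝⁿ} ( f(x) + c_*·dist(g(x), C) ). -/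

import Mathlib

open scoped Pointwise

/-- Corollary to Theorem 3.2, converse direction: if `f` is bounded below on
`ℝⁿ` and `liminf_{u → 0, u ≠ 0} (V(u) - V(0)) / ‖u‖ > -∞`, then the distance
penalty is exact for some constant `c_* > 0`. -/
theorem stmt_7 {n m : ℕ}
    (f : EuclideanSpace ℝ (Fin n) → EReal) (hf : ∀ x, f x ≠ ⊥)
    (g : EuclideanSpace ℝ (Fin n) → EuclideanSpace ℝ (Fin m))
    (C : Set (EuclideanSpace ℝ (Fin m))) (hC : C.Nonempty)
    (fstar : ℝ) (hfstar : (fstar : EReal) = ⨅ x ∈ {x | g x ∈ C}, f x)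
    (mlow : ℝ) (hlow : ∀ x, (mlow : EReal) ≤ f x)
    (V : EuclideanSpace ℝ (Fin m) → EReal)
    (hV : ∀ u, V u = ⨅ x ∈ {x | g x ∈ C + ({u} : Set (EuclideanSpace ℝ (Fin m)))}, f x)
    (hliminf : ⊥ < Filter.liminf
      (fun u => (V u - V 0) / ((‖u‖ : ℝ) : EReal))
      (nhdsWithin (0 : EuclideanSpace ℝ (Fin m)) {0}ᶜ)) :
    ∃ cstar : ℝ, 0 < cstar ∧
      (⨅ x ∈ {x | g x ∈ C}, f x) =
        ⨅ x, f x + ((cstar * Metric.infDist (g x) C : ℝ) : EReal) := by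
  classical
  have hC0 : C + ({0} : Set (EuclideanSpace ℝ (Fin m))) = C := by
    simp
  have hV0 : V 0 = (fstar : EReal) := by
    rw [hV 0, hC0, ← hfstar]
  -- extract a real lower bound on the liminf quotient
  obtain ⟨b, hb_bot, hb_lt⟩ := exists_between hliminf
  have hb_top : b < ⊤ := hb_lt.trans_le le_top
  set c0 : ℝ := b.toReal with hc0def
  have hbc : (c0 : EReal) = b := EReal.coe_toReal hb_top.ne hb_bot.ne'
  have hev : ∀ᶠ u in nhdsWithin (0 : EuclideanSpace ℝ (Fin m)) {0}ᶜ,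
      b < (V u - V 0) / ((‖u‖ : ℝ) : EReal) :=
    Filter.eventually_lt_of_lt_liminf hb_lt
  rw [Filter.eventually_iff, Metric.mem_nhdsWithin_iff] at hev
  obtain ⟨δ, hδ, hball⟩ := hev
  have hVlow : ∀ u, (mlow : EReal) ≤ V u := fun u => by
    rw [hV u]; exact le_iInf₂ fun x _ => hlow x
  -- key quantitative bound on V near 0
  have hkey : ∀ u : EuclideanSpace ℝ (Fin m), u ≠ 0 → ‖u‖ < δ →
      ((fstar + c0 * ‖u‖ : ℝ) : EReal) ≤ V u := by
    intro u hu0 huδ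
    have hmem : u ∈ Metric.ball (0 : EuclideanSpace ℝ (Fin m)) δ ∩ {0}ᶜ := by
      constructor
      · simpa [Metric.mem_ball, dist_zero_right] using huδ
      · simpa using hu0
    have h1 : b < (V u - V 0) / ((‖u‖ : ℝ) : EReal) := hball hmem
    rcases eq_or_ne (V u) ⊤ with hT | hT
    · simp [hT]
    have hB : V u ≠ ⊥ := by
      intro h
      have := hVlow u
      rw [h] at this
      exact absurd this (by simp)
    set v : ℝ := (V u).toReal with hvdef
    have hv : (v : EReal) = V u := EReal.coe_toReal hT hB
    have hnu : (0 : ℝ) < ‖u‖ := norm_pos_iff.mpr hu0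
    rw [← hv, hV0, ← EReal.coe_sub, ← EReal.coe_div, ← hbc, EReal.coe_lt_coe_iff] at h1
    have h2 : c0 * ‖u‖ < v - fstar := (lt_div_iff₀ hnu).mp h1
    rw [← hv]
    exact_mod_cast le_of_lt (by linarith : fstar + c0 * ‖u‖ < v)
  -- choice of penalty constant
  set cstar : ℝ := max 1 (max |c0| (2 * (fstar - mlow) / δ)) with hcsdef
  have hcpos : (0 : ℝ) < cstar := lt_of_lt_of_le one_pos (le_max_left _ _)
  have hcabs : |c0| ≤ cstar := le_trans (le_max_left _ _) (le_max_right _ _)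
  have hcml : 2 * (fstar - mlow) / δ ≤ cstar :=
    le_trans (le_max_right _ _) (le_max_right _ _)
  -- main claim: fstar ≤ f x + cstar * dist(g x, C) for all x
  have hclaim : ∀ x, (fstar : EReal) ≤ f x + ((cstar * Metric.infDist (g x) C : ℝ) : EReal) := by
    intro x
    set d : ℝ := Metric.infDist (g x) C with hddef
    have hd0 : (0 : ℝ) ≤ d := Metric.infDist_nonneg
    rcases le_or_gt (δ / 2) d with hcase | hcase
    · -- far case : use the global lower bound mlow
      have h3 : fstar - mlow ≤ cstar * (δ / 2) := by
        have h4 : 2 * (fstar - mlow) / δ * (δ / 2) = fstar - mlow := by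
          field_simp
        calc fstar - mlow = 2 * (fstar - mlow) / δ * (δ / 2) := h4.symm
          _ ≤ cstar * (δ / 2) := mul_le_mul_of_nonneg_right hcml (by linarith)
      have h5 : fstar ≤ mlow + cstar * d := by nlinarith
      calc (fstar : EReal) ≤ ((mlow + cstar * d : ℝ) : EReal) := by exact_mod_cast h5
        _ = (mlow : EReal) + ((cstar * d : ℝ) : EReal) := by push_cast; ring
        _ ≤ f x + ((cstar * d : ℝ) : EReal) := add_le_add_left (hlow x) _
    · -- near case
      refine le_of_forall_lt_imp_le_of_dense fun z hz => ?_
      rcases eq_or_ne z ⊥ with rfl | hzB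
      · exact bot_le
      have hzT : z ≠ ⊤ := (hz.trans_le le_top).ne
      set r : ℝ := z.toReal with hrdef
      have hzr : (r : EReal) = z := EReal.coe_toReal hzT hzB
      rw [← hzr, EReal.coe_lt_coe_iff] at hz
      rw [← hzr]
      -- choose ε
      set ε : ℝ := min (δ / 2) ((fstar - r) / (|c0| + 1)) with hεdef
      have habs0 : (0 : ℝ) ≤ |c0| := abs_nonneg _
      have hε : 0 < ε := by
        apply lt_min (by linarith)
        apply div_pos (by linarith) (by linarith)
      have hε1 : ε ≤ δ / 2 := min_le_left _ _
      have hε2 : ε * (|c0| + 1) ≤ fstar - r := by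
        have := min_le_right (δ / 2) ((fstar - r) / (|c0| + 1))
        rw [← hεdef] at this
        calc ε * (|c0| + 1) ≤ (fstar - r) / (|c0| + 1) * (|c0| + 1) :=
              mul_le_mul_of_nonneg_right this (by linarith)
          _ = fstar - r := by field_simp
      obtain ⟨y, hyC, hy⟩ := (Metric.infDist_lt_iff hC).mp
        (show Metric.infDist (g x) C < d + ε by rw [← hddef]; linarith)
      set u : EuclideanSpace ℝ (Fin m) := g x - y with hudef
      have hnu : ‖u‖ < d + ε := by rw [hudef, ← dist_eq_norm]; exact hy
      have hmemu : g x ∈ C + ({u} : Set (EuclideanSpace ℝ (Fin m))) := by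
        have : y + u ∈ C + ({u} : Set (EuclideanSpace ℝ (Fin m))) :=
          Set.add_mem_add hyC rfl
        simpa [hudef, add_sub_cancel] using this
      have hfxV : V u ≤ f x := by
        rw [hV u]; exact iInf₂_le x hmemu
      have hdpos : (0 : ℝ) ≤ cstar * d := mul_nonneg hcpos.le hd0
      rcases eq_or_ne u 0 with hu0 | hu0
      · -- then g x ∈ C, so f x ≥ fstar
        have hgx : g x ∈ C := by
          have : g x = y := by
            have := hu0
            rw [hudef, sub_eq_zero] at this
            exact this
          rwa [this]
        have hfx : (fstar : EReal) ≤ f x := by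
          rw [hfstar]; exact iInf₂_le x hgx
        calc (r : EReal) ≤ (fstar : EReal) := by exact_mod_cast hz.le
          _ ≤ f x := hfx
          _ ≤ f x + ((cstar * d : ℝ) : EReal) :=
              le_add_of_nonneg_right (by exact_mod_cast hdpos)
      · have hnuδ : ‖u‖ < δ := by linarith
        have hfx : ((fstar + c0 * ‖u‖ : ℝ) : EReal) ≤ f x :=
          le_trans (hkey u hu0 hnuδ) hfxV
        have hr : r ≤ fstar + c0 * ‖u‖ + cstar * d := by
          have A : |c0| * ‖u‖ ≤ |c0| * (d + ε) :=
            mul_le_mul_of_nonneg_left hnu.le habs0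
          have B : -|c0| * ‖u‖ ≤ c0 * ‖u‖ :=
            mul_le_mul_of_nonneg_right (neg_abs_le c0) (norm_nonneg _)
          have Bc : |c0| * d ≤ cstar * d := mul_le_mul_of_nonneg_right hcabs hd0
          nlinarith
        calc (r : EReal) ≤ ((fstar + c0 * ‖u‖ : ℝ) : EReal) + ((cstar * d : ℝ) : EReal) := by
              rw [← EReal.coe_add]; exact_mod_cast hr
          _ ≤ f x + ((cstar * d : ℝ) : EReal) := add_le_add_left hfx _
  refine ⟨cstar, hcpos, ?_⟩
  rw [← hfstar]
  apply le_antisymm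
  · exact le_iInf hclaim
  · rw [hfstar]
    refine le_iInf₂ fun x hx => ?_
    have h0 : Metric.infDist (g x) C = 0 := Metric.infDist_zero_of_mem hx
    calc (⨅ x', f x' + ((cstar * Metric.infDist (g x') C : ℝ) : EReal))
        ≤ f x + ((cstar * Metric.infDist (g x) C : ℝ) : EReal) := iInf_le _ x
      _ = f x := by rw [h0]; simp
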